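/- Let T be a bounded self-adjoint operator on the Hilbert space ℓ²(ℕ, ℂ) with canonical orthonormal basis (e_n)_{n∈ℕ} (indexed from 1), and suppose T e₁ = q₁ e₁ + b₁ e₂ with q₁ ∈ ℝ and b₁ > 0. Let V := {e₁}^⊥ be the orthogonal complement of the span of e₁, P_V the orthogonal projection onto V, and T' : V → V the compression T' x := P_V(T x) for x ∈ V. Then for every ζ ∈ ℂ with Im ζ ≠ 0: T − ζI is boundedly invertible on ℓ², T' − ζI is boundedly invertible on V, m(ζ) := ⟨(T − ζI)^{-1} e₁, e₁⟩ ≠ 0, and ⟨(T' − ζI)^{-1} e₂, e₂⟩ = −(1/b₁²)·((ζ − q₁) + 1/m(ζ)). -/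

import Mathlib

open scoped InnerProductSpace

section Aux
variable {E : Type*} [NormedAddCommGroup E] [InnerProductSpace ℂ E] [CompleteSpace E]

lemma aux_unit (A : E →L[ℂ] E) (hA : IsSelfAdjoint A) {ζ : ℂ} (hζ : ζ.im ≠ 0) :
    IsUnit (A - ζ • (1 : E →L[ℂ] E)) := by
  have h : ζ ∉ spectrum ℂ A := fun h => hζ (hA.im_eq_zero_of_mem_spectrum h)
  rw [spectrum.notMem_iff] at h
  have := h.neg
  rwa [neg_sub, Algebra.algebraMap_eq_smul_one] at this

omit [CompleteSpace E] in
lemma aux_inv_apply (A : E →L[ℂ] E) (hA : IsUnit A) (x : E) :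
    A (Ring.inverse A x) = x := by
  have h := Ring.mul_inverse_cancel A hA
  calc A (Ring.inverse A x) = (A * Ring.inverse A) x := rfl
  _ = x := by rw [h]; rfl

omit [CompleteSpace E] in
lemma aux_inv_apply₂ (A : E →L[ℂ] E) (hA : IsUnit A) (x : E) :
    Ring.inverse A (A x) = x := by
  have h := Ring.inverse_mul_cancel A hA
  calc Ring.inverse A (A x) = (Ring.inverse A * A) x := rfl
  _ = x := by rw [h]; rfl

lemma aux_m_ne (A : E →L[ℂ] E) (hA : IsSelfAdjoint A) {ζ : ℂ} (hζ : ζ.im ≠ 0)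
    {x : E} (hx : x ≠ 0) :
    ⟪x, Ring.inverse (A - ζ • (1 : E →L[ℂ] E)) x⟫_ℂ ≠ 0 := by
  have hU := aux_unit A hA hζ
  set u := Ring.inverse (A - ζ • (1 : E →L[ℂ] E)) x with hu
  have h1 : (A - ζ • (1 : E →L[ℂ] E)) u = x := aux_inv_apply _ hU x
  have hune : u ≠ 0 := by intro h0; rw [h0, map_zero] at h1; exact hx h1.symm
  have h2 : ⟪x, u⟫_ℂ = ⟪A u, u⟫_ℂ - (starRingEnd ℂ ζ) * ⟪u, u⟫_ℂ := by
    rw [← h1]; simp [inner_sub_left, inner_smul_left]; ring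
  have hre : (⟪A u, u⟫_ℂ).im = 0 := by
    rw [← Complex.conj_eq_iff_im, inner_conj_symm]
    exact (ContinuousLinearMap.isSelfAdjoint_iff_isSymmetric.mp hA u u).symm
  have h3 : ⟪u, u⟫_ℂ = (‖u‖ : ℂ) ^ 2 := inner_self_eq_norm_sq_to_K u
  intro hcon
  have himm : (⟪x, u⟫_ℂ).im = ζ.im * ‖u‖ ^ 2 := by
    rw [h2, h3]; simp [hre, Complex.mul_im, ← Complex.ofReal_pow]
  rw [hcon] at himm
  rcases mul_eq_zero.mp himm.symm with h | h
  · exact hζ h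
  · exact hune (by simpa using (pow_eq_zero_iff (n := 2) (by norm_num)).mp h : u = 0)

end Aux

set_option maxHeartbeats 1000000 in
set_option synthInstance.maxHeartbeats 400000 in
theorem ricatti_equation_for_truncated_jacobi
    (T : lp (fun _ : ℕ => ℂ) 2 →L[ℂ] lp (fun _ : ℕ => ℂ) 2)
    (hT : IsSelfAdjoint T)
    (e : ℕ → lp (fun _ : ℕ => ℂ) 2)
    (he : ∀ n, e n = lp.single 2 n 1)
    (q₁ b₁ : ℝ) (hb₁ : 0 < b₁)
    (hTe : T (e 0) = (q₁ : ℂ) • e 0 + (b₁ : ℂ) • e 1)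
    (T' : ↥((Submodule.span ℂ {e 0})ᗮ) →L[ℂ] ↥((Submodule.span ℂ {e 0})ᗮ))
    (hT' : ∀ x : ↥((Submodule.span ℂ {e 0})ᗮ),
        T' x = Submodule.orthogonalProjectionOnto ((Submodule.span ℂ {e 0})ᗮ) (T x)) :
    ∀ ζ : ℂ, ζ.im ≠ 0 →
      IsUnit (T - ζ • (1 : lp (fun _ : ℕ => ℂ) 2 →L[ℂ] lp (fun _ : ℕ => ℂ) 2)) ∧
      IsUnit (T' - ζ • (1 : ↥((Submodule.span ℂ {e 0})ᗮ) →L[ℂ] ↥((Submodule.span ℂ {e 0})ᗮ))) ∧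
      ⟪e 0, Ring.inverse
          (T - ζ • (1 : lp (fun _ : ℕ => ℂ) 2 →L[ℂ] lp (fun _ : ℕ => ℂ) 2)) (e 0)⟫_ℂ ≠ 0 ∧
      ∀ v : ↥((Submodule.span ℂ {e 0})ᗮ), (v : lp (fun _ : ℕ => ℂ) 2) = e 1 →
        ⟪v, Ring.inverse
            (T' - ζ • (1 : ↥((Submodule.span ℂ {e 0})ᗮ) →L[ℂ] ↥((Submodule.span ℂ {e 0})ᗮ))) v⟫_ℂ =
          -(1 / (b₁ : ℂ) ^ 2) *
            ((ζ - (q₁ : ℂ)) +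
              1 / ⟪e 0, Ring.inverse
                  (T - ζ • (1 : lp (fun _ : ℕ => ℂ) 2 →L[ℂ] lp (fun _ : ℕ => ℂ) 2)) (e 0)⟫_ℂ) := by
  intro ζ hζ
  classical
  have he0 := he 0
  have he1 := he 1
  have hinner_e0 : ∀ f : lp (fun _ : ℕ => ℂ) 2, ⟪e 0, f⟫_ℂ = f 0 := by
    intro f; rw [he0, lp.inner_single_left]; simp [RCLike.inner_apply]
  have h00 : ⟪e 0, e 0⟫_ℂ = 1 := by
    rw [hinner_e0, he0]; exact lp.single_apply_self 2 0 1
  have h01 : ⟪e 0, e 1⟫_ℂ = 0 := by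
    rw [hinner_e0, he1]; exact lp.single_apply_ne 2 1 1 (by norm_num)
  have h10 : ⟪e 1, e 0⟫_ℂ = 0 := by
    rw [← inner_conj_symm, h01, map_zero]
  have he0ne : e 0 ≠ 0 := by
    intro h; rw [h, inner_zero_left] at h00; exact one_ne_zero h00.symm
  have hnorm : ‖e 0‖ = 1 := by
    have h1 : (‖e 0‖ : ℂ) ^ 2 = 1 := (inner_self_eq_norm_sq_to_K (e 0)).symm.trans h00
    have h2 : ‖e 0‖ ^ 2 = 1 := by exact_mod_cast h1
    nlinarith [norm_nonneg (e 0)]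
  -- self-adjointness of T'
  have hsym := hT.isSymmetric
  have hT'sym : (T' : ↥((Submodule.span ℂ {e 0})ᗮ) →ₗ[ℂ] ↥((Submodule.span ℂ {e 0})ᗮ)).IsSymmetric := by
    intro x y
    simp only [ContinuousLinearMap.coe_coe]
    rw [hT' x, hT' y, Submodule.inner_orthogonalProjectionOnto_eq_of_mem_right,
      Submodule.inner_orthogonalProjectionOnto_eq_of_mem_left]
    exact hsym (↑x) (↑y)
  have hT'sa : IsSelfAdjoint T' := ContinuousLinearMap.isSelfAdjoint_iff_isSymmetric.mpr hT'sym
  have hU := aux_unit T hT hζ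
  have hU' := aux_unit T' hT'sa hζ
  have hm := aux_m_ne T hT hζ he0ne
  refine ⟨hU, hU', hm, ?_⟩
  intro v hv
  set A := T - ζ • (1 : lp (fun _ : ℕ => ℂ) 2 →L[ℂ] lp (fun _ : ℕ => ℂ) 2) with hAdef
  set A' := T' - ζ • (1 : ↥((Submodule.span ℂ {e 0})ᗮ) →L[ℂ] ↥((Submodule.span ℂ {e 0})ᗮ)) with hA'def
  set u := Ring.inverse A (e 0) with hu
  set m := ⟪e 0, u⟫_ℂ with hmdef
  set R' := Ring.inverse A' with hR'def
  set m' := ⟪v, R' v⟫_ℂ with hm'def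
  have hAu : A u = e 0 := aux_inv_apply A hU (e 0)
  -- projections
  set P := Submodule.orthogonalProjectionOnto ((Submodule.span ℂ {e 0})ᗮ) with hPdef
  have hPe0 : P (e 0) = 0 :=
    Submodule.orthogonalProjectionOnto_orthogonal_apply_eq_zero
      (Submodule.mem_span_singleton_self (e 0))
  have hPe1 : P (e 1) = v := by
    rw [← hv]; exact Submodule.orthogonalProjectionOnto_mem_subspace_eq_self v
  set w : ↥((Submodule.span ℂ {e 0})ᗮ) := P u with hwdef
  have hPw : P (↑w) = w := Submodule.orthogonalProjectionOnto_mem_subspace_eq_self w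
  have hdecomp : u = m • e 0 + (↑w : lp (fun _ : ℕ => ℂ) 2) := by
    have hsum : (((Submodule.span ℂ {e 0}).orthogonalProjectionOnto u : lp (fun _ : ℕ => ℂ) 2)) +
          (((Submodule.span ℂ {e 0})ᗮ.orthogonalProjectionOnto u : lp (fun _ : ℕ => ℂ) 2)) = u :=
        Submodule.starProjection_add_starProjection_orthogonal u
    have hPk : ((Submodule.orthogonalProjectionOnto (Submodule.span ℂ {e 0}) u) : lp (fun _ : ℕ => ℂ) 2)
        = m • e 0 := by
      rw [← Submodule.starProjection_apply, Submodule.starProjection_unit_singleton (𝕜 := ℂ) hnorm u]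
    rw [← hsum, hPk]
  -- projected equation
  have hTu : T u = m • ((q₁ : ℂ) • e 0 + (b₁ : ℂ) • e 1) + T ↑w := by
    conv_lhs => rw [hdecomp]
    rw [map_add, map_smul, hTe]
  have hPu : P u = w := rfl
  have hPTu : P (T u) = (m * b₁) • v + T' w := by
    rw [hTu, map_add, map_smul, map_add, map_smul, map_smul, hPe0, hPe1, ← hT' w]
    rw [smul_zero, zero_add, smul_smul]
  have hproj : (m * b₁) • v + (T' w - ζ • w) = 0 := by
    have h := congrArg P hAu
    rw [hPe0] at h
    have hAu' : A u = T u - ζ • u := by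
      rw [hAdef]; simp [ContinuousLinearMap.sub_apply, ContinuousLinearMap.smul_apply]
    rw [hAu', map_sub, map_smul, hPTu, hPu] at h
    rw [← h]; abel
  have hA'w : A' w = -((m * b₁) • v) := by
    have h1 : A' w = T' w - ζ • w := by
      rw [hA'def]; simp [ContinuousLinearMap.sub_apply, ContinuousLinearMap.smul_apply]
    rw [h1]
    exact eq_neg_of_add_eq_zero_right hproj
  have hw : w = -((m * b₁) • R' v) := by
    have h1 : R' (A' w) = w := aux_inv_apply₂ A' hU' w
    rw [hA'w, map_neg, map_smul] at h1
    exact h1.symm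
  -- scalar equation
  have hscalar : (1 : ℂ) = (q₁ : ℂ) * m - ζ * m - m * (b₁ : ℂ) ^ 2 * m' := by
    have h1 : (1 : ℂ) = ⟪e 0, A u⟫_ℂ := by rw [hAu, h00]
    have hAu' : A u = T u - ζ • u := by
      rw [hAdef]; simp [ContinuousLinearMap.sub_apply, ContinuousLinearMap.smul_apply]
    rw [hAu', inner_sub_right, inner_smul_right] at h1
    have h2 : ⟪e 0, T u⟫_ℂ = (q₁ : ℂ) * m + (b₁ : ℂ) * ⟪e 1, u⟫_ℂ := by
      have hsymm : ⟪e 0, T u⟫_ℂ = ⟪T (e 0), u⟫_ℂ := by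
        have h := hsym (e 0) u
        simpa using h.symm
      rw [hsymm, hTe, inner_add_left, inner_smul_left, inner_smul_left, Complex.conj_ofReal,
        Complex.conj_ofReal, ← hmdef]
    have h3 : ⟪e 1, u⟫_ℂ = -(m * (b₁ : ℂ) * m') := by
      conv_lhs => rw [hdecomp]
      rw [inner_add_right, inner_smul_right, h10, mul_zero, zero_add]
      have h4 : ⟪e 1, (↑w : lp (fun _ : ℕ => ℂ) 2)⟫_ℂ = ⟪v, w⟫_ℂ := by
        rw [Submodule.coe_inner, hv]
      rw [h4, hw, inner_neg_right, inner_smul_right]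
      try ring
    rw [h2, h3] at h1
    rw [h1]; ring
  -- conclude
  have hb : (b₁ : ℂ) ≠ 0 := Complex.ofReal_ne_zero.mpr hb₁.ne'
  field_simp
  linear_combination hscalar
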